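/- Let F_r (r ≥ 3) be freely generated by the disjoint union X ⊔ Y of two nonempty sets, and let w = w_X w_Y where w_X lies in the subgroup generated by X and w_Y lies in the subgroup generated by Y. Then w is not primitivity-blocking: some cyclically reduced primitive element of F_r contains w as a subword. -/

import Mathlib

open FreeGroup

/-- The free group of rank `r` on the basis `Fin r`. -/
abbrev F (r : ℕ) := FreeGroup (Fin r)

/-- `v` is a subword of `u`: the reduced word of `v` occurs as a contiguous
block of the reduced word of `u`. -/
def Subword {α : Type*} [DecidableEq α] (v u : FreeGroup α) : Prop :=
  v.toWord <:+: u.toWord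

/-- `u` is cyclically reduced: the first letter of its reduced word is not the
inverse of its last letter. -/
def CyclRed {α : Type*} [DecidableEq α] (u : FreeGroup α) : Prop :=
  ∀ a ∈ u.toWord.head?, ∀ b ∈ u.toWord.getLast?, a ≠ (b.1, !b.2)

/-- `u` is primitive: some automorphism sends a generator to `u`
(equivalently, `u` belongs to a basis). -/
def IsPrimitive {α : Type*} [DecidableEq α] (u : FreeGroup α) : Prop :=
  ∃ (φ : FreeGroup α ≃* FreeGroup α) (i : α), φ (FreeGroup.of i) = u

/-- `v` is primitivity-blocking: it is not a subword of any cyclically reduced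
primitive element. -/
def PrimitivityBlocking {α : Type*} [DecidableEq α] (v : FreeGroup α) : Prop :=
  ∀ u : FreeGroup α, IsPrimitive u → CyclRed u → ¬ Subword v u

/-- Reduced word length. -/
def len {α : Type*} [DecidableEq α] (u : FreeGroup α) : ℕ := u.toWord.length

/-- `v` is `w`-orbit-blocking: for every automorphism `φ`, `v` is not a subword
of the cyclic reduction of `φ w` (i.e. of any cyclically reduced element
conjugate to `φ w`). -/
def OrbitBlocking {α : Type*} [DecidableEq α] (w v : FreeGroup α) : Prop :=
  ∀ (φ : FreeGroup α ≃* FreeGroup α) (c : FreeGroup α),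
    CyclRed c → IsConj c (φ w) → ¬ Subword v c

/-- A word is slender if some generator occurs (with exponent `±1`) at most
once in its reduced word. -/
def Slender {α : Type*} [DecidableEq α] (w : FreeGroup α) : Prop :=
  ∃ x : α, (w.toWord.countP fun p => decide (p.1 = x)) ≤ 1

set_option linter.unusedSectionVars false

namespace Stmt5Aux

set_option linter.unusedSectionVars false

variable {α : Type*} [DecidableEq α]

/-- Two adjacent letters do not cancel. -/
def NoCancel (a b : α × Bool) : Prop := ¬(a.1 = b.1 ∧ a.2 = !b.2)

lemma noCancel_of_ne {a b : α × Bool} (h : a.1 ≠ b.1) : NoCancel a b := fun hc => h hc.1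

lemma reduce_eq_self_of_chain' : ∀ {L : List (α × Bool)},
    List.Chain' NoCancel L → FreeGroup.reduce L = L
  | [], _ => rfl
  | x :: L, h => by
    have hL : FreeGroup.reduce L = L := reduce_eq_self_of_chain' h.tail
    rw [FreeGroup.reduce.cons, hL]
    cases L with
    | nil => rfl
    | cons hd tl =>
      have hx : NoCancel x hd := (List.isChain_cons_cons.1 h).1
      simp only [NoCancel] at hx
      simp [hx]

lemma chain'_of_reduce_eq_self : ∀ {L : List (α × Bool)},
    FreeGroup.reduce L = L → List.Chain' NoCancel L
  | [], _ => List.IsChain.nil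
  | x :: L, h => by
    have hlen : (FreeGroup.reduce L).length ≤ L.length :=
      (FreeGroup.Red.sublist FreeGroup.reduce.red).length_le
    rw [FreeGroup.reduce.cons] at h
    rcases hrl : FreeGroup.reduce L with _ | ⟨hd, tl⟩
    · rw [hrl] at h
      simp only at h
      have : L = [] := by simpa using congrArg List.tail h.symm
      subst this
      exact List.isChain_singleton _
    · rw [hrl] at h hlen
      simp only at h
      by_cases hc : x.1 = hd.1 ∧ x.2 = !hd.2
      · rw [if_pos hc] at h
        have h1 : tl.length = L.length + 1 := by simpa using congrArg List.length h
        simp only [List.length_cons] at hlen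
        omega
      · rw [if_neg hc] at h
        have hL : L = hd :: tl := by simpa using (congrArg List.tail h).symm
        rw [hL]
        rw [hL] at hrl
        exact List.isChain_cons_cons.2 ⟨hc, chain'_of_reduce_eq_self hrl⟩

lemma chain'_toWord (x : FreeGroup α) : List.Chain' NoCancel x.toWord :=
  chain'_of_reduce_eq_self (FreeGroup.reduce_toWord x)

lemma mem_of_getLast?' {l : List (α × Bool)} {a : α × Bool} (h : a ∈ l.getLast?) : a ∈ l := by
  obtain ⟨h', rfl⟩ := List.mem_getLast?_eq_getLast h
  exact List.getLast_mem h'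

lemma letters_of_closure {s : Set α} {w : FreeGroup α}
    (hw : w ∈ Subgroup.closure {u : FreeGroup α | ∃ a ∈ s, FreeGroup.of a = u}) :
    ∀ p ∈ w.toWord, p.1 ∈ s := by
  induction hw using Subgroup.closure_induction with
  | mem u hu =>
    obtain ⟨a, ha, rfl⟩ := hu
    intro p hp
    rw [FreeGroup.toWord_of] at hp
    simp at hp
    rw [hp]
    exact ha
  | one => simp [FreeGroup.toWord_one]
  | mul x y hx hy ihx ihy =>
    intro p hp
    have := (FreeGroup.toWord_mul_sublist x y).subset hp
    rcases List.mem_append.1 this with h | h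
    · exact ihx p h
    · exact ihy p h
  | inv x hx ih =>
    intro p hp
    rw [FreeGroup.toWord_inv] at hp
    simp only [FreeGroup.invRev, List.mem_reverse, List.mem_map] at hp
    obtain ⟨q, hq, rfl⟩ := hp
    exact ih q hq


lemma hom_fix {s : Set α} (f : FreeGroup α →* FreeGroup α)
    (hf : ∀ a ∈ s, f (FreeGroup.of a) = FreeGroup.of a) {w : FreeGroup α}
    (hw : w ∈ Subgroup.closure {u : FreeGroup α | ∃ a ∈ s, FreeGroup.of a = u}) :
    f w = w :=
  MonoidHom.eqOn_closure (f := f) (g := MonoidHom.id _)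
    (by rintro u ⟨a, ha, rfl⟩; exact hf a ha) hw

lemma hom_conj {s : Set α} (f : FreeGroup α →* FreeGroup α) (c : FreeGroup α)
    (hf : ∀ a ∈ s, f (FreeGroup.of a) = c * FreeGroup.of a * c⁻¹) {w : FreeGroup α}
    (hw : w ∈ Subgroup.closure {u : FreeGroup α | ∃ a ∈ s, FreeGroup.of a = u}) :
    f w = c * w * c⁻¹ :=
  MonoidHom.eqOn_closure (f := f) (g := (MulAut.conj c).toMonoidHom)
    (by rintro u ⟨a, ha, rfl⟩; simpa using hf a ha) hw

/-- homomorphism conjugating the `P`-generators by `c` and fixing the rest. -/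
def condConj (P : α → Prop) [DecidablePred P] (c : FreeGroup α) : FreeGroup α →* FreeGroup α :=
  FreeGroup.lift (fun a => if P a then c⁻¹ * FreeGroup.of a * c else FreeGroup.of a)

lemma condConj_of_pos (P : α → Prop) [DecidablePred P] (c : FreeGroup α) {a : α} (ha : P a) :
    condConj P c (FreeGroup.of a) = c⁻¹ * FreeGroup.of a * c := by
  rw [condConj, FreeGroup.lift_apply_of, if_pos ha]

lemma condConj_of_neg (P : α → Prop) [DecidablePred P] (c : FreeGroup α) {a : α} (ha : ¬ P a) :
    condConj P c (FreeGroup.of a) = FreeGroup.of a := by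
  rw [condConj, FreeGroup.lift_apply_of, if_neg ha]

lemma condConj_fix (P : α → Prop) [DecidablePred P] (c : FreeGroup α) {w : FreeGroup α}
    (hw : w ∈ Subgroup.closure {u : FreeGroup α | ∃ a ∈ {a | ¬ P a}, FreeGroup.of a = u}) :
    condConj P c w = w :=
  hom_fix _ (fun a ha => condConj_of_neg P c ha) hw

lemma condConj_conj (P : α → Prop) [DecidablePred P] (c : FreeGroup α) {w : FreeGroup α}
    (hw : w ∈ Subgroup.closure {u : FreeGroup α | ∃ a ∈ {a | P a}, FreeGroup.of a = u}) :
    condConj P c w = c⁻¹ * w * c := by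
  have := hom_conj (condConj P c) c⁻¹
    (fun a ha => by rw [condConj_of_pos P c ha, inv_inv]) hw
  rwa [inv_inv] at this

lemma condConj_comp (P : α → Prop) [DecidablePred P] (c : FreeGroup α)
    (hc : c ∈ Subgroup.closure {u : FreeGroup α | ∃ a ∈ {a | ¬ P a}, FreeGroup.of a = u}) :
    (condConj P c⁻¹).comp (condConj P c) = MonoidHom.id _ := by
  apply FreeGroup.ext_hom
  intro a
  by_cases ha : P a
  · rw [MonoidHom.comp_apply, MonoidHom.id_apply, condConj_of_pos P c ha,
      _root_.map_mul, _root_.map_mul, _root_.map_inv, condConj_fix P c⁻¹ hc,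
      condConj_of_pos P c⁻¹ ha]
    group
  · rw [MonoidHom.comp_apply, MonoidHom.id_apply, condConj_of_neg P c ha,
      condConj_of_neg P c⁻¹ ha]

/-- transvection: left-multiply the generator `g₀` by `c`, fix the rest. -/
def transv (g₀ : α) (c : FreeGroup α) : FreeGroup α →* FreeGroup α :=
  FreeGroup.lift (fun a => if a = g₀ then c * FreeGroup.of a else FreeGroup.of a)

lemma transv_of_pos (g₀ : α) (c : FreeGroup α) :
    transv g₀ c (FreeGroup.of g₀) = c * FreeGroup.of g₀ := by
  rw [transv, FreeGroup.lift_apply_of, if_pos rfl]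

lemma transv_of_neg (g₀ : α) (c : FreeGroup α) {a : α} (ha : a ≠ g₀) :
    transv g₀ c (FreeGroup.of a) = FreeGroup.of a := by
  rw [transv, FreeGroup.lift_apply_of, if_neg ha]

lemma transv_fix (g₀ : α) (c : FreeGroup α) {w : FreeGroup α}
    (hw : w ∈ Subgroup.closure {u : FreeGroup α | ∃ a ∈ {a | a ≠ g₀}, FreeGroup.of a = u}) :
    transv g₀ c w = w :=
  hom_fix _ (fun a ha => transv_of_neg g₀ c ha) hw

lemma transv_comp (g₀ : α) (c d : FreeGroup α)
    (hc : c ∈ Subgroup.closure {u : FreeGroup α | ∃ a ∈ {a | a ≠ g₀}, FreeGroup.of a = u})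
    (hd : d ∈ Subgroup.closure {u : FreeGroup α | ∃ a ∈ {a | a ≠ g₀}, FreeGroup.of a = u})
    (hcd : c * d = 1) :
    (transv g₀ d).comp (transv g₀ c) = MonoidHom.id _ := by
  apply FreeGroup.ext_hom
  intro a
  by_cases ha : a = g₀
  · subst ha
    rw [MonoidHom.comp_apply, MonoidHom.id_apply, transv_of_pos, _root_.map_mul,
      transv_fix _ d hc, transv_of_pos, ← mul_assoc, hcd, one_mul]
  · rw [MonoidHom.comp_apply, MonoidHom.id_apply, transv_of_neg g₀ c ha,
      transv_of_neg g₀ d ha]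

lemma exists_aut (P : α → Prop) [DecidablePred P] (g₀ : α) (hg₀ : ¬ P g₀)
    (c₁ c₂ : FreeGroup α)
    (h₁ : c₁ ∈ Subgroup.closure {u : FreeGroup α | ∃ a ∈ {a | P a}, FreeGroup.of a = u})
    (h₂ : c₂ ∈ Subgroup.closure {u : FreeGroup α | ∃ a ∈ {a | ¬ P a}, FreeGroup.of a = u}) :
    ∃ e : FreeGroup α ≃* FreeGroup α,
      e (FreeGroup.of g₀) = c₂⁻¹ * (c₁ * (c₂ * FreeGroup.of g₀)) := by
  have hsub : ∀ {w : FreeGroup α},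
      w ∈ Subgroup.closure {u : FreeGroup α | ∃ a ∈ {a | P a}, FreeGroup.of a = u} →
      w ∈ Subgroup.closure {u : FreeGroup α | ∃ a ∈ {a | a ≠ g₀}, FreeGroup.of a = u} := by
    intro w hw
    refine Subgroup.closure_mono ?_ hw
    rintro u ⟨a, ha, rfl⟩
    exact ⟨a, fun hh => hg₀ (hh ▸ ha), rfl⟩
  have hinv : c₂⁻¹ ∈ Subgroup.closure
      {u : FreeGroup α | ∃ a ∈ {a | ¬ P a}, FreeGroup.of a = u} := inv_mem h₂
  refine ⟨(MonoidHom.toMulEquiv (transv g₀ c₁) (transv g₀ c₁⁻¹)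
      (transv_comp g₀ c₁ c₁⁻¹ (hsub h₁) (hsub (inv_mem h₁)) (mul_inv_cancel c₁))
      (transv_comp g₀ c₁⁻¹ c₁ (hsub (inv_mem h₁)) (hsub h₁) (inv_mul_cancel c₁))).trans
    (MonoidHom.toMulEquiv (condConj P c₂) (condConj P c₂⁻¹)
      (condConj_comp P c₂ h₂) (by simpa using condConj_comp P c₂⁻¹ hinv)), ?_⟩
  simp only [MulEquiv.trans_apply, MonoidHom.toMulEquiv_apply]
  rw [transv_of_pos, _root_.map_mul, condConj_of_neg P c₂ hg₀, condConj_conj P c₂ h₁]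
  group


lemma core (P : α → Prop) [DecidablePred P] (wP wQ : FreeGroup α)
    (hP : wP ∈ Subgroup.closure {u : FreeGroup α | ∃ a ∈ {a | P a}, FreeGroup.of a = u})
    (hQ : wQ ∈ Subgroup.closure {u : FreeGroup α | ∃ a ∈ {a | ¬ P a}, FreeGroup.of a = u})
    (xb : α) (hxb : P xb)
    (g₀ : α) (hg₀ : ¬ P g₀)
    (hlast : ∀ p ∈ wQ.toWord.getLast?, p.1 ≠ g₀) :
    ∃ p : FreeGroup α, IsPrimitive p ∧ CyclRed p ∧ Subword (wP * wQ) p := by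
  classical
  have hA : ∀ p ∈ wP.toWord, P p.1 := letters_of_closure hP
  have hB : ∀ p ∈ wQ.toWord, ¬ P p.1 := letters_of_closure hQ
  have hchA : List.Chain' NoCancel wP.toWord := chain'_toWord wP
  have hchB : List.Chain' NoCancel wQ.toWord := chain'_toWord wQ
  by_cases hA0 : wP.toWord = []
  · -- degenerate case : wP = 1
    have hwP : wP = 1 := FreeGroup.toWord_eq_nil_iff.1 hA0
    subst hwP
    refine ⟨wQ * FreeGroup.of xb, ?_, ?_, ?_⟩
    · obtain ⟨e, he⟩ := exists_aut (fun a => ¬ P a) xb (not_not_intro hxb) wQ 1 hQ (one_mem _)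
      exact ⟨e, xb, by rw [he]; group⟩
    · have hch : List.Chain' NoCancel (wQ.toWord ++ [(xb, true)]) := by
        refine List.isChain_append.2 ⟨hchB, List.isChain_singleton _, ?_⟩
        intro x hx y hy
        simp only [List.head?_cons, Option.mem_some_iff] at hy
        subst hy
        exact noCancel_of_ne (fun h => hB x (mem_of_getLast?' hx) (h ▸ hxb))
      have hv : wQ * FreeGroup.of xb = FreeGroup.mk (wQ.toWord ++ [(xb, true)]) := by
        conv_lhs => rw [← FreeGroup.mk_toWord (x := wQ)]
        rw [show FreeGroup.of xb = FreeGroup.mk [(xb, true)] from rfl, FreeGroup.mul_mk]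
      have htw : (wQ * FreeGroup.of xb).toWord = wQ.toWord ++ [(xb, true)] := by
        rw [hv, FreeGroup.toWord_mk, reduce_eq_self_of_chain' hch]
      intro a ha b hb
      rw [htw] at ha hb
      rw [List.getLast?_concat] at hb
      simp only [Option.mem_some_iff] at hb
      subst hb
      have haL := List.mem_of_mem_head? ha
      rcases List.mem_append.1 haL with h | h
      · intro hc
        exact hB a h (by rw [hc] at *; exact hxb)
      · simp only [List.mem_singleton] at h
        subst h
        simp
    · have hch : List.Chain' NoCancel (wQ.toWord ++ [(xb, true)]) := by
        refine List.isChain_append.2 ⟨hchB, List.isChain_singleton _, ?_⟩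
        intro x hx y hy
        simp only [List.head?_cons, Option.mem_some_iff] at hy
        subst hy
        exact noCancel_of_ne (fun h => hB x (mem_of_getLast?' hx) (h ▸ hxb))
      have hv : wQ * FreeGroup.of xb = FreeGroup.mk (wQ.toWord ++ [(xb, true)]) := by
        conv_lhs => rw [← FreeGroup.mk_toWord (x := wQ)]
        rw [show FreeGroup.of xb = FreeGroup.mk [(xb, true)] from rfl, FreeGroup.mul_mk]
      have htw : (wQ * FreeGroup.of xb).toWord = wQ.toWord ++ [(xb, true)] := by
        rw [hv, FreeGroup.toWord_mk, reduce_eq_self_of_chain' hch]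
      rw [Subword, one_mul, htw]
      exact ⟨[], [(xb, true)], by simp⟩
  · -- main case : wP ≠ 1
    set ℓ : α × Bool := (g₀, true) with hℓ
    set L : List (α × Bool) :=
      FreeGroup.invRev wQ.toWord ++ (wP.toWord ++ (wQ.toWord ++ [ℓ])) with hLdef
    have hBi_word : (wQ⁻¹).toWord = FreeGroup.invRev wQ.toWord := FreeGroup.toWord_inv _
    have hBi : ∀ p ∈ FreeGroup.invRev wQ.toWord, ¬ P p.1 := by
      intro p hp
      rw [← hBi_word] at hp
      exact letters_of_closure (inv_mem hQ) p hp
    have hchBi : List.Chain' NoCancel (FreeGroup.invRev wQ.toWord) := by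
      rw [← hBi_word]; exact chain'_toWord _
    have hjoinBl : ∀ x ∈ wQ.toWord.getLast?, ∀ y ∈ [ℓ].head?, NoCancel x y := by
      intro x hx y hy
      simp only [List.head?_cons, Option.mem_some_iff] at hy
      subst hy
      exact noCancel_of_ne (hlast x hx)
    have hch : List.Chain' NoCancel L := by
      refine List.isChain_append.2 ⟨hchBi, ?_, ?_⟩
      · refine List.isChain_append.2 ⟨hchA, ?_, ?_⟩
        · exact List.isChain_append.2 ⟨hchB, List.isChain_singleton _, hjoinBl⟩
        · intro x hx y hy
          have hxA := mem_of_getLast?' hx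
          have hyy := List.mem_of_mem_head? hy
          have hny : ¬ P y.1 := by
            rcases List.mem_append.1 hyy with h | h
            · exact hB y h
            · simp only [List.mem_singleton] at h
              subst h
              exact hg₀
          exact noCancel_of_ne (fun hh => hny (hh ▸ hA x hxA))
      · intro x hx y hy
        have hx' : ¬ P x.1 := hBi x (mem_of_getLast?' hx)
        rw [List.head?_append_of_ne_nil _ hA0] at hy
        have hy' : P y.1 := hA y (List.mem_of_mem_head? hy)
        exact noCancel_of_ne (fun hh => hx' (hh ▸ hy'))
    have hv : wQ⁻¹ * (wP * (wQ * FreeGroup.of g₀)) = FreeGroup.mk L := by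
      conv_lhs => rw [← FreeGroup.mk_toWord (x := wP), ← FreeGroup.mk_toWord (x := wQ)]
      rw [FreeGroup.inv_mk, show FreeGroup.of g₀ = FreeGroup.mk [ℓ] from rfl,
        FreeGroup.mul_mk, FreeGroup.mul_mk, FreeGroup.mul_mk]
    have htw : (FreeGroup.mk L).toWord = L := by
      rw [FreeGroup.toWord_mk, reduce_eq_self_of_chain' hch]
    refine ⟨FreeGroup.mk L, ?_, ?_, ?_⟩
    · obtain ⟨e, he⟩ := exists_aut P g₀ hg₀ wP wQ hP hQ
      exact ⟨e, g₀, by rw [he, hv]⟩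
    · intro a ha b hb
      rw [htw] at ha hb
      have hb' : b = ℓ := by
        have : L = (FreeGroup.invRev wQ.toWord ++ wP.toWord ++ wQ.toWord) ++ [ℓ] := by
          simp [hLdef, List.append_assoc]
        rw [this, List.getLast?_concat] at hb
        simpa using hb.symm
      subst hb'
      by_cases hB0 : wQ.toWord = []
      · have haL := List.mem_of_mem_head? ha
        have : a ∈ wP.toWord ∨ a = ℓ := by
          rw [hLdef, hB0] at haL
          simp only [FreeGroup.invRev, List.map_nil, List.reverse_nil, List.nil_append,
            List.mem_append, List.mem_singleton] at haL
          tauto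
        rcases this with h | h
        · exact fun hc => hg₀ (by rw [← show a.1 = g₀ from congrArg Prod.fst hc]; exact hA a h)
        · subst h; simp [hℓ]
      · have hne : FreeGroup.invRev wQ.toWord ≠ [] := by
          intro hc
          apply hB0
          have := congrArg List.length hc
          rw [FreeGroup.invRev_length] at this
          exact List.length_eq_zero_iff.1 this
        rw [hLdef, List.head?_append_of_ne_nil _ hne] at ha
        obtain ⟨b', hb'⟩ : ∃ b', wQ.toWord.getLast? = some b' := by
          cases h : wQ.toWord.getLast? with
          | none => exact absurd (List.getLast?_eq_none_iff.1 h) hB0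
          | some b' => exact ⟨b', rfl⟩
        have hhead : (FreeGroup.invRev wQ.toWord).head? = some (b'.1, !b'.2) := by
          rw [FreeGroup.invRev, List.head?_reverse, List.getLast?_map, hb']
          rfl
        rw [hhead] at ha
        simp only [Option.mem_some_iff] at ha
        subst ha
        have : b'.1 ≠ g₀ := hlast b' (by rw [hb']; rfl)
        intro hc
        exact this (congrArg Prod.fst hc)
    · have hchAB : List.Chain' NoCancel (wP.toWord ++ wQ.toWord) := by
        refine List.isChain_append.2 ⟨hchA, hchB, ?_⟩
        intro x hx y hy
        have hx' : P x.1 := hA x (mem_of_getLast?' hx)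
        have hy' : ¬ P y.1 := hB y (List.mem_of_mem_head? hy)
        exact noCancel_of_ne (fun hh => hy' (hh ▸ hx'))
      have hPQ : (wP * wQ).toWord = wP.toWord ++ wQ.toWord := by
        conv_lhs => rw [← FreeGroup.mk_toWord (x := wP), ← FreeGroup.mk_toWord (x := wQ)]
        rw [FreeGroup.mul_mk, FreeGroup.toWord_mk, reduce_eq_self_of_chain' hchAB]
      rw [Subword, hPQ, htw]
      exact ⟨FreeGroup.invRev wQ.toWord, [ℓ], by simp [hLdef, List.append_assoc]⟩


lemma isPrimitive_inv {u : FreeGroup α} (h : IsPrimitive u) : IsPrimitive u⁻¹ := by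
  obtain ⟨φ, i, hi⟩ := h
  have hcomp : (FreeGroup.lift (fun a => (FreeGroup.of a)⁻¹) : FreeGroup α →* FreeGroup α).comp
      (FreeGroup.lift (fun a => (FreeGroup.of a)⁻¹)) = MonoidHom.id _ := by
    apply FreeGroup.ext_hom
    intro a
    rw [MonoidHom.comp_apply, MonoidHom.id_apply, FreeGroup.lift_apply_of, _root_.map_inv,
      FreeGroup.lift_apply_of, inv_inv]
  refine ⟨(MonoidHom.toMulEquiv _ _ hcomp hcomp).trans φ, i, ?_⟩
  simp only [MulEquiv.trans_apply, MonoidHom.toMulEquiv_apply]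
  rw [FreeGroup.lift_apply_of, _root_.map_inv, hi]

lemma cyclRed_inv {u : FreeGroup α} (h : CyclRed u) : CyclRed u⁻¹ := by
  intro a ha b hb
  rw [FreeGroup.toWord_inv, FreeGroup.invRev] at ha hb
  rw [List.head?_reverse, List.getLast?_map] at ha
  rw [List.getLast?_reverse, List.head?_map] at hb
  simp only [Option.mem_def, Option.map_eq_some_iff] at ha hb
  obtain ⟨b', hb', rfl⟩ := ha
  obtain ⟨a', ha', rfl⟩ := hb
  have hmain : a' ≠ (b'.1, !b'.2) := h a' (by simp [ha']) b' (by simp [hb'])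
  intro hc
  rw [Prod.mk.injEq] at hc
  obtain ⟨h1, h2⟩ := hc
  simp only [Bool.not_not] at h2
  exact hmain (Prod.ext h1.symm h2.symm)

lemma subword_inv {v u : FreeGroup α} (h : Subword v u) : Subword v⁻¹ u⁻¹ := by
  obtain ⟨s, t, hst⟩ := h
  refine ⟨FreeGroup.invRev t, FreeGroup.invRev s, ?_⟩
  rw [FreeGroup.toWord_inv, FreeGroup.toWord_inv, ← hst]
  simp [FreeGroup.invRev, List.map_append, List.reverse_append, List.append_assoc]

end Stmt5Aux

/-- a product `w_X w_Y` with factors from complementary free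
factors is not primitivity-blocking. -/
theorem stmt5 {X Y : Type*} [DecidableEq X] [DecidableEq Y] [Fintype X] [Fintype Y]
    [Nonempty X] [Nonempty Y] (hr : 3 ≤ Fintype.card X + Fintype.card Y)
    (wX wY : FreeGroup (X ⊕ Y))
    (hwX : wX ∈ Subgroup.closure (Set.range fun x : X => FreeGroup.of (Sum.inl x : X ⊕ Y)))
    (hwY : wY ∈ Subgroup.closure (Set.range fun y : Y => FreeGroup.of (Sum.inr y : X ⊕ Y))) :
    ∃ p : FreeGroup (X ⊕ Y), IsPrimitive p ∧ CyclRed p ∧ Subword (wX * wY) p := by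
  classical
  open Stmt5Aux in
  by_cases hY2 : 1 < Fintype.card Y
  · -- use P = isLeft, conjugate wX by wY, transvect at a fresh inr-generator
    have hsetX : (Set.range fun x : X => FreeGroup.of (Sum.inl x : X ⊕ Y)) =
        {u : FreeGroup (X ⊕ Y) | ∃ a ∈ {a : X ⊕ Y | a.isLeft = true}, FreeGroup.of a = u} := by
      ext u
      constructor
      · rintro ⟨x, rfl⟩; exact ⟨Sum.inl x, rfl, rfl⟩
      · rintro ⟨a, ha, rfl⟩
        cases a with
        | inl x => exact ⟨x, rfl⟩
        | inr y => simp at ha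
    have hsetY : (Set.range fun y : Y => FreeGroup.of (Sum.inr y : X ⊕ Y)) =
        {u : FreeGroup (X ⊕ Y) | ∃ a ∈ {a : X ⊕ Y | ¬ (a.isLeft = true)}, FreeGroup.of a = u} := by
      ext u
      constructor
      · rintro ⟨y, rfl⟩; exact ⟨Sum.inr y, by simp, rfl⟩
      · rintro ⟨a, ha, rfl⟩
        cases a with
        | inl x => simp at ha
        | inr y => exact ⟨y, rfl⟩
    rw [hsetX] at hwX
    rw [hsetY] at hwY
    obtain ⟨y₀, hy₀⟩ : ∃ y₀ : Y, ∀ p ∈ wY.toWord.getLast?, p.1 ≠ (Sum.inr y₀ : X ⊕ Y) := by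
      cases h : wY.toWord.getLast? with
      | none => exact ⟨Classical.arbitrary Y, by simp [h]⟩
      | some b =>
        have hbmem : b ∈ wY.toWord := Stmt5Aux.mem_of_getLast?' h
        have hb : ¬ ((b.1).isLeft = true) := Stmt5Aux.letters_of_closure hwY b hbmem
        obtain ⟨y₁, hy₁⟩ : ∃ y₁, b.1 = Sum.inr y₁ := by
          cases habs : b.1 with
          | inl x => rw [habs] at hb; simp at hb
          | inr y => exact ⟨y, rfl⟩
        obtain ⟨y₀, hy₀⟩ := Fintype.exists_ne_of_one_lt_card hY2 y₁
        refine ⟨y₀, ?_⟩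
        intro p hp
        simp only [Option.mem_some_iff] at hp
        subst hp
        rw [hy₁]
        exact fun hc => hy₀ (Sum.inr_injective hc).symm
    exact Stmt5Aux.core (fun a : X ⊕ Y => a.isLeft = true) wX wY hwX hwY
      (Sum.inl (Classical.arbitrary X)) rfl (Sum.inr y₀) (by simp) hy₀
  · -- |Y| = 1, so |X| ≥ 2 : work with the inverse word and P = isRight
    have hX2 : 1 < Fintype.card X := by
      have h1 : 0 < Fintype.card Y := Fintype.card_pos
      omega
    have hsetX : (Set.range fun x : X => FreeGroup.of (Sum.inl x : X ⊕ Y)) =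
        {u : FreeGroup (X ⊕ Y) | ∃ a ∈ {a : X ⊕ Y | ¬ (a.isRight = true)}, FreeGroup.of a = u} := by
      ext u
      constructor
      · rintro ⟨x, rfl⟩; exact ⟨Sum.inl x, by simp, rfl⟩
      · rintro ⟨a, ha, rfl⟩
        cases a with
        | inl x => exact ⟨x, rfl⟩
        | inr y => simp at ha
    have hsetY : (Set.range fun y : Y => FreeGroup.of (Sum.inr y : X ⊕ Y)) =
        {u : FreeGroup (X ⊕ Y) | ∃ a ∈ {a : X ⊕ Y | a.isRight = true}, FreeGroup.of a = u} := by
      ext u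
      constructor
      · rintro ⟨y, rfl⟩; exact ⟨Sum.inr y, rfl, rfl⟩
      · rintro ⟨a, ha, rfl⟩
        cases a with
        | inl x => simp at ha
        | inr y => exact ⟨y, rfl⟩
    rw [hsetX] at hwX
    rw [hsetY] at hwY
    have hwX' : wX⁻¹ ∈ Subgroup.closure
        {u : FreeGroup (X ⊕ Y) | ∃ a ∈ {a : X ⊕ Y | ¬ (a.isRight = true)}, FreeGroup.of a = u} :=
      inv_mem hwX
    have hwY' : wY⁻¹ ∈ Subgroup.closure
        {u : FreeGroup (X ⊕ Y) | ∃ a ∈ {a : X ⊕ Y | a.isRight = true}, FreeGroup.of a = u} :=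
      inv_mem hwY
    obtain ⟨x₀, hx₀⟩ : ∃ x₀ : X, ∀ p ∈ (wX⁻¹).toWord.getLast?, p.1 ≠ (Sum.inl x₀ : X ⊕ Y) := by
      cases h : (wX⁻¹).toWord.getLast? with
      | none => exact ⟨Classical.arbitrary X, by simp [h]⟩
      | some b =>
        have hbmem : b ∈ (wX⁻¹).toWord := Stmt5Aux.mem_of_getLast?' h
        have hb : ¬ ((b.1).isRight = true) := Stmt5Aux.letters_of_closure hwX' b hbmem
        obtain ⟨x₁, hx₁⟩ : ∃ x₁, b.1 = Sum.inl x₁ := by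
          cases habs : b.1 with
          | inl x => exact ⟨x, rfl⟩
          | inr y => rw [habs] at hb; simp at hb
        obtain ⟨x₀, hx₀⟩ := Fintype.exists_ne_of_one_lt_card hX2 x₁
        refine ⟨x₀, ?_⟩
        intro p hp
        simp only [Option.mem_some_iff] at hp
        subst hp
        rw [hx₁]
        exact fun hc => hx₀ (Sum.inl_injective hc).symm
    obtain ⟨q, h1, h2, h3⟩ := Stmt5Aux.core (fun a : X ⊕ Y => a.isRight = true) (wY⁻¹) (wX⁻¹)
      hwY' hwX' (Sum.inr (Classical.arbitrary Y)) rfl (Sum.inl x₀) (by simp) hx₀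
    refine ⟨q⁻¹, Stmt5Aux.isPrimitive_inv h1, Stmt5Aux.cyclRed_inv h2, ?_⟩
    have h4 := Stmt5Aux.subword_inv h3
    rwa [mul_inv_rev, inv_inv, inv_inv] at h4
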